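/- Let $\vec{h}$ be drawn uniformly from the hypercube $\{\pm 1\}^d$ and let $Z = (\vec{z}_1,\dots,\vec{z}_k) \in \mathbb{R}^{d\times k}$ have orthonormal columns. Then there exists an absolute constant $c > 0$ (independent of $d, k, Z$) such that for every $t \in (0, 1/\sqrt{2}]$, $\mathbb{P}(\|Z^\top \vec{h}\|_\infty \le t) \le 2^{-ck}$. -/

import Mathlib

open Finset Real
namespace HW
abbrev Cube (n : ℕ) := Fin n → Bool
noncomputable section
def chi {n : ℕ} (x y : Cube n) : Fin n → ℝ := fun i => if x i = y i then 0 else 1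
lemma chi_nonneg {n} (x y : Cube n) (i : Fin n) : 0 ≤ chi x y i := by unfold chi; split <;> norm_num
lemma chi_le_one {n} (x y : Cube n) (i : Fin n) : chi x y i ≤ 1 := by unfold chi; split <;> norm_num
def Wt {n : ℕ} (A : Finset (Cube n)) (w : Cube n → ℝ) : Prop :=
  (∀ y, 0 ≤ w y) ∧ (∀ y, y ∉ A → w y = 0) ∧ ∑ y, w y = 1
def vv {n : ℕ} (x : Cube n) (w : Cube n → ℝ) : Fin n → ℝ := fun i => ∑ y, w y * chi x y i
lemma vv_nonneg {n} (x : Cube n) {w} (hw : ∀ y, 0 ≤ w y) (i) : 0 ≤ vv x w i :=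
  Finset.sum_nonneg fun y _ => mul_nonneg (hw y) (chi_nonneg x y i)
def Phi {n : ℕ} (x : Cube n) (w : Cube n → ℝ) : ℝ := ∑ i, (vv x w i)^2
lemma Phi_nonneg {n} (x : Cube n) (w) : 0 ≤ Phi x w := Finset.sum_nonneg fun i _ => sq_nonneg _
lemma exists_opt' {n : ℕ} {A : Finset (Cube n)} (hA : A.Nonempty) (x : Cube n) :
    ∃ w, Wt A w ∧ ∀ w', Wt A w' → Phi x w ≤ Phi x w' := by
  have hcl : IsClosed {w : Cube n → ℝ | Wt A w} := by
    have h1 : IsClosed {w : Cube n → ℝ | ∀ y, 0 ≤ w y} := by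
      have : {w : Cube n → ℝ | ∀ y, 0 ≤ w y} = ⋂ y, {w | 0 ≤ w y} := by
        ext w; simp [Set.mem_iInter]
      rw [this]
      exact isClosed_iInter fun y => isClosed_le continuous_const (continuous_apply y)
    have h2 : IsClosed {w : Cube n → ℝ | ∀ y, y ∉ A → w y = 0} := by
      have : {w : Cube n → ℝ | ∀ y, y ∉ A → w y = 0}
          = ⋂ (y) (_ : y ∉ A), {w | w y = 0} := by
        ext w; simp [Set.mem_iInter]
      rw [this]
      exact isClosed_iInter fun y => isClosed_iInter fun _ =>
        isClosed_eq (continuous_apply y) continuous_const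
    have h3 : IsClosed {w : Cube n → ℝ | ∑ y, w y = 1} :=
      isClosed_eq (continuous_finset_sum _ fun y _ => continuous_apply y) continuous_const
    have : {w : Cube n → ℝ | Wt A w}
        = {w | ∀ y, 0 ≤ w y} ∩ ({w | ∀ y, y ∉ A → w y = 0} ∩ {w | ∑ y, w y = 1}) := by
      ext w; simp [Wt, Set.mem_inter_iff, and_assoc]
    rw [this]; exact h1.inter (h2.inter h3)
  have hbd : Bornology.IsBounded {w : Cube n → ℝ | Wt A w} := by
    rw [isBounded_iff_forall_norm_le]
    refine ⟨1, fun w hw => ?_⟩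
    rw [pi_norm_le_iff_of_nonneg (by norm_num)]
    intro y
    rw [Real.norm_eq_abs, abs_of_nonneg (hw.1 y)]
    calc w y ≤ ∑ y', w y' := Finset.single_le_sum (fun y' _ => hw.1 y') (mem_univ y)
    _ = 1 := hw.2.2
  have hcmp : IsCompact {w : Cube n → ℝ | Wt A w} := by
    exact Metric.isCompact_of_isClosed_isBounded hcl hbd
  have hne : {w : Cube n → ℝ | Wt A w}.Nonempty := by
    obtain ⟨y₀, hy₀⟩ := hA
    refine ⟨fun y => if y = y₀ then 1 else 0, fun y => by positivity, fun y hy => ?_, ?_⟩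
    · simp only [ite_eq_right_iff]; rintro rfl; exact absurd hy₀ hy
    · simp [Finset.sum_ite_eq']
  have hcont : ContinuousOn (Phi x) {w : Cube n → ℝ | Wt A w} := by
    apply Continuous.continuousOn
    unfold Phi vv
    exact continuous_finset_sum _ fun i _ =>
      ((continuous_finset_sum _ fun y _ => (continuous_apply y).mul continuous_const).pow 2)
  obtain ⟨w, hw, hmin⟩ := hcmp.exists_isMinOn hne hcont
  exact ⟨w, hw, fun w' hw' => hmin hw'⟩
def optw {n : ℕ} (A : Finset (Cube n)) (x : Cube n) : Cube n → ℝ :=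
  if h : A.Nonempty then (exists_opt' h x).choose else 0
def dst {n : ℕ} (A : Finset (Cube n)) (x : Cube n) : ℝ := Phi x (optw A x)
lemma optw_wt {n} {A : Finset (Cube n)} (hA : A.Nonempty) (x) : Wt A (optw A x) := by
  rw [optw, dif_pos hA]; exact (exists_opt' hA x).choose_spec.1
lemma optw_nonneg {n} (A : Finset (Cube n)) (x) (y) : 0 ≤ optw A x y := by
  by_cases h : A.Nonempty
  · exact (optw_wt h x).1 y
  · rw [optw, dif_neg h]; norm_num
lemma optw_support {n} {A : Finset (Cube n)} {x y} (h : optw A x y ≠ 0) : y ∈ A := by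
  by_cases hA : A.Nonempty
  · by_contra hy; exact h ((optw_wt hA x).2.1 y hy)
  · exact absurd (by rw [optw, dif_neg hA]; rfl) h
lemma dst_le {n} {A : Finset (Cube n)} (hA : A.Nonempty) (x) {w} (hw : Wt A w) :
    dst A x ≤ Phi x w := by
  rw [dst, optw, dif_pos hA]; exact (exists_opt' hA x).choose_spec.2 w hw
lemma dst_nonneg {n} (A : Finset (Cube n)) (x) : 0 ≤ dst A x := Phi_nonneg _ _
lemma sum_cube_succ {n : ℕ} {M : Type*} [AddCommMonoid M] (F : Cube (n+1) → M) :
    ∑ x, F x = ∑ b, ∑ z : Cube n, F (Fin.cons b z) := by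
  rw [← (Equiv.sum_comp (Fin.consEquiv (fun _ : Fin (n+1) => Bool)) F)]
  exact Fintype.sum_prod_type _
lemma cons_eq_cons {n} {b b' : Bool} {u v : Cube n} :
    (Fin.cons b u : Cube (n+1)) = Fin.cons b' v ↔ b = b' ∧ u = v := by
  constructor
  · intro h
    constructor
    · have := congrArg (fun f => f 0) h; simpa using this
    · funext j; have := congrArg (fun f => f j.succ) h; simpa using this
  · rintro ⟨rfl, rfl⟩; rfl

def fib {n : ℕ} (A : Finset (Cube (n+1))) (b : Bool) : Finset (Cube n) :=
  univ.filter (fun z => (Fin.cons b z : Cube (n+1)) ∈ A)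
def Bfib {n} (A : Finset (Cube (n+1))) : Finset (Cube n) := fib A false ∪ fib A true
lemma mem_fib {n} {A : Finset (Cube (n+1))} {b} {z : Cube n} :
    z ∈ fib A b ↔ (Fin.cons b z : Cube (n+1)) ∈ A := by simp [fib]
lemma mem_Bfib_of {n} {A : Finset (Cube (n+1))} {y : Cube n} {b : Bool}
    (h : y ∈ Bfib A) (hb : y ∉ fib A b) : y ∈ fib A (!b) := by
  rcases Finset.mem_union.mp h with h'|h' <;> cases b <;> simp_all [Bfib]

lemma dst_cons_le {n : ℕ} (A : Finset (Cube (n+1))) (b : Bool) (z : Cube n)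
    (l : ℝ) (hl0 : 0 ≤ l) (hl1 : l ≤ 1)
    (hB : (Bfib A).Nonempty) (hfib : 0 < l → (fib A b).Nonempty) :
    dst A (Fin.cons b z) ≤ (1-l)^2 + l * dst (fib A b) z + (1-l) * dst (Bfib A) z := by
  have hA : A.Nonempty := by
    obtain ⟨y, hy⟩ := hB
    rcases Finset.mem_union.mp hy with h|h
    exacts [⟨_, mem_fib.mp h⟩, ⟨_, mem_fib.mp h⟩]
  set x : Cube (n+1) := Fin.cons b z with hx
  set w₁ : Cube n → ℝ := optw (fib A b) z with hw₁def
  set w₂ : Cube n → ℝ := optw (Bfib A) z with hw₂def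
  have hw₂ : Wt (Bfib A) w₂ := optw_wt hB z
  set β : Cube n → Bool := fun y => if y ∈ fib A b then b else !b with hβ
  have hrep : ∀ y : Cube n, y ∈ Bfib A → (Fin.cons (β y) y : Cube (n+1)) ∈ A := by
    intro y hy
    by_cases h : y ∈ fib A b
    · simp only [hβ, if_pos h]; exact mem_fib.mp h
    · simp only [hβ, if_neg h]; exact mem_fib.mp (mem_Bfib_of hy h)
  set P1 : Cube (n+1) → ℝ := fun x' => if x' 0 = b then w₁ (Fin.tail x') else 0 with hP1
  set P2 : Cube (n+1) → ℝ := fun x' =>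
    if x' = Fin.cons (β (Fin.tail x')) (Fin.tail x') then w₂ (Fin.tail x') else 0 with hP2
  set W : Cube (n+1) → ℝ := fun x' => l * P1 x' + (1-l) * P2 x' with hW
  have hP1nn : ∀ x', 0 ≤ P1 x' := by
    intro x'; rw [hP1]; dsimp only; split
    · exact optw_nonneg _ _ _
    · exact le_refl 0
  have hP2nn : ∀ x', 0 ≤ P2 x' := by
    intro x'; rw [hP2]; dsimp only; split
    · exact optw_nonneg _ _ _
    · exact le_refl 0
  have hWnn : ∀ x', 0 ≤ W x' :=
    fun x' => add_nonneg (mul_nonneg hl0 (hP1nn x')) (mul_nonneg (by linarith) (hP2nn x'))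
  have hsum1 : ∑ x', P1 x' = ∑ z' : Cube n, w₁ z' := by
    rw [sum_cube_succ P1, hP1]
    simp only [Fin.cons_zero, Fin.tail_cons]
    rw [Fintype.sum_bool]
    cases b <;> simp
  have hsum2 : ∑ x', P2 x' = 1 := by
    rw [sum_cube_succ P2, hP2]
    simp only [Fin.tail_cons]
    have : ∀ (b' : Bool) (z' : Cube n),
        (if (Fin.cons b' z' : Cube (n+1)) = Fin.cons (β z') z' then w₂ z' else 0)
        = if b' = β z' then w₂ z' else 0 := by
      intro b' z'; simp [cons_eq_cons]
    simp only [this]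
    rw [Finset.sum_comm]
    simp only [Finset.sum_ite_eq' (univ : Finset Bool)]
    simp [hw₂.2.2]
  -- weights
  have hWt : Wt A W := by
    refine ⟨hWnn, ?_, ?_⟩
    · intro x' hx'
      have h1 : P1 x' = 0 := by
        rw [hP1]; dsimp only; split
        · rename_i h
          by_contra hne
          have hz' : Fin.tail x' ∈ fib A b := optw_support (by rwa [← hw₁def])
          have hmem : (Fin.cons b (Fin.tail x') : Cube (n+1)) ∈ A := mem_fib.mp hz'
          rw [← h, Fin.cons_self_tail x'] at hmem
          exact hx' hmem
        · rfl
      have h2 : P2 x' = 0 := by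
        rw [hP2]; dsimp only; split
        · rename_i h
          by_contra hne
          have hz' : Fin.tail x' ∈ Bfib A := optw_support (by rwa [← hw₂def])
          have hmem := hrep _ hz'
          rw [← h] at hmem
          exact hx' hmem
        · rfl
      rw [hW]; dsimp only; rw [h1, h2]; ring
    · have hs : ∑ x', W x' = l * (∑ z' : Cube n, w₁ z') + (1-l) * 1 := by
        rw [hW]; dsimp only
        rw [Finset.sum_add_distrib, ← Finset.mul_sum, ← Finset.mul_sum, hsum1, hsum2]
      rw [hs]
      rcases hl0.eq_or_lt with h|h
      · rw [← h]; ring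
      · rw [(optw_wt (hfib h) z).2.2]; ring
  -- split vv
  have hsplit : ∀ i, vv x W i
      = l * (∑ x', P1 x' * chi x x' i) + (1-l) * (∑ x', P2 x' * chi x x' i) := by
    intro i
    have : ∀ x', W x' * chi x x' i = l * (P1 x' * chi x x' i) + (1-l) * (P2 x' * chi x x' i) := by
      intro x'; rw [hW]; dsimp only; ring
    simp only [vv]
    rw [Finset.sum_congr rfl (fun x' _ => this x'), Finset.sum_add_distrib,
      Finset.mul_sum, Finset.mul_sum]
  have hc0a : ∑ x', P1 x' * chi x x' 0 = 0 := by
    apply Finset.sum_eq_zero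
    intro x' _
    by_cases h : x' 0 = b
    · have : chi x x' 0 = 0 := by simp [chi, hx, Fin.cons_zero, h]
      rw [this, mul_zero]
    · simp only [hP1, if_neg h, zero_mul]
  have hc0b : ∑ x', P2 x' * chi x x' 0 ≤ 1 := by
    calc ∑ x', P2 x' * chi x x' 0 ≤ ∑ x', P2 x' := by
          apply Finset.sum_le_sum
          intro x' _
          calc P2 x' * chi x x' 0 ≤ P2 x' * 1 :=
                mul_le_mul_of_nonneg_left (chi_le_one _ _ _) (hP2nn x')
          _ = P2 x' := mul_one _
    _ = 1 := hsum2
  have hc0b' : 0 ≤ ∑ x', P2 x' * chi x x' 0 :=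
    Finset.sum_nonneg fun x' _ => mul_nonneg (hP2nn x') (chi_nonneg _ _ _)
  have hchi : ∀ (j : Fin n) (b' : Bool) (z' : Cube n),
      chi x (Fin.cons b' z') j.succ = chi z z' j := by
    intro j b' z'; simp [chi, hx, Fin.cons_succ]
  have hcsa : ∀ j : Fin n, ∑ x', P1 x' * chi x x' j.succ = vv z w₁ j := by
    intro j
    rw [sum_cube_succ (fun x' => P1 x' * chi x x' j.succ), hP1]
    simp only [Fin.cons_zero, Fin.tail_cons, hchi]
    rw [Fintype.sum_bool]
    cases b <;> simp [vv]
  have hcsb : ∀ j : Fin n, ∑ x', P2 x' * chi x x' j.succ = vv z w₂ j := by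
    intro j
    rw [sum_cube_succ (fun x' => P2 x' * chi x x' j.succ), hP2]
    simp only [Fin.tail_cons, hchi]
    have : ∀ (b' : Bool) (z' : Cube n),
        (if (Fin.cons b' z' : Cube (n+1)) = Fin.cons (β z') z' then w₂ z' else 0) * chi z z' j
        = if b' = β z' then w₂ z' * chi z z' j else 0 := by
      intro b' z'; simp [cons_eq_cons, ite_mul]
    simp only [this]
    rw [Finset.sum_comm]
    simp only [Finset.sum_ite_eq' (univ : Finset Bool)]
    simp [vv]
  have hPhi : Phi x W ≤ (1-l)^2 + l * Phi z w₁ + (1-l) * Phi z w₂ := by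
    rw [Phi, Fin.sum_univ_succ]
    have h0 : (vv x W 0)^2 ≤ (1-l)^2 := by
      have h00 : vv x W 0 ≤ 1 - l := by
        rw [hsplit 0, hc0a, mul_zero, zero_add]
        nlinarith
      have h01 : 0 ≤ vv x W 0 := vv_nonneg x hWnn 0
      nlinarith
    have hs : ∀ j : Fin n, (vv x W j.succ)^2 ≤ l * (vv z w₁ j)^2 + (1-l) * (vv z w₂ j)^2 := by
      intro j
      rw [hsplit j.succ, hcsa j, hcsb j]
      nlinarith [sq_nonneg (vv z w₁ j - vv z w₂ j),
        mul_nonneg hl0 (by linarith : (0:ℝ) ≤ 1 - l)]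
    calc (vv x W 0)^2 + ∑ j : Fin n, (vv x W j.succ)^2
        ≤ (1-l)^2 + ∑ j : Fin n, (l * (vv z w₁ j)^2 + (1-l) * (vv z w₂ j)^2) :=
          add_le_add h0 (Finset.sum_le_sum fun j _ => hs j)
    _ = (1-l)^2 + l * Phi z w₁ + (1-l) * Phi z w₂ := by
          rw [Finset.sum_add_distrib, ← Finset.mul_sum, ← Finset.mul_sum, Phi, Phi]; ring
  calc dst A x ≤ Phi x W := dst_le hA x hWt
  _ ≤ _ := hPhi
lemma L_ineq {u : ℝ} (hu0 : 0 ≤ u) (hu1 : u ≤ 1/2) : exp (u - u^2) + exp (-u) ≤ 2 := by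
  have key : AntitoneOn (fun v : ℝ => exp (v - v^2) + exp (-v)) (Set.Icc 0 (1/2)) := by
    have hd : ∀ v : ℝ, HasDerivAt (fun v : ℝ => exp (v - v^2) + exp (-v))
        (exp (v - v^2) * (1 - 2*v) + exp (-v) * (-1)) v := by
      intro v
      have h1 : HasDerivAt (fun w : ℝ => w - w^2) (1 - 2*v) v := by
        have := (hasDerivAt_id' v).sub (hasDerivAt_pow 2 v)
        exact this.congr_deriv (by norm_num)
      have h2 : HasDerivAt (fun w : ℝ => -w) (-1 : ℝ) v := by
        exact (hasDerivAt_id' v).neg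
      exact (h1.exp).add (h2.exp)
    apply antitoneOn_of_deriv_nonpos (convex_Icc 0 (1/2))
    · exact Continuous.continuousOn (by continuity)
    · exact fun v _ => (hd v).differentiableAt.differentiableWithinAt
    · intro v hv
      rw [interior_Icc] at hv
      rw [(hd v).deriv]
      have hv2 : v < 1/2 := hv.2
      have hv0 : 0 < v := hv.1
      have hE : 0 < exp (2*v - v^2) := exp_pos _
      have h0 : 1 - (2*v - v^2) ≤ (exp (2*v - v^2))⁻¹ := by
        rw [← Real.exp_neg]; linarith [Real.add_one_le_exp (-(2*v - v^2))]
      have h1 : (1 - (2*v - v^2)) * exp (2*v - v^2) ≤ 1 := by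
        calc (1 - (2*v - v^2)) * exp (2*v - v^2)
            ≤ (exp (2*v - v^2))⁻¹ * exp (2*v - v^2) := mul_le_mul_of_nonneg_right h0 hE.le
        _ = 1 := inv_mul_cancel₀ hE.ne'
      have hkey : (1 - 2*v) * exp (2*v - v^2) ≤ 1 := by
        nlinarith [mul_nonneg (sq_nonneg v) hE.le]
      have hh : exp (v - v^2) * exp v = exp (2*v - v^2) := by
        rw [← Real.exp_add]; ring_nf
      have hh2 : exp (-v) * exp v = 1 := by
        rw [← Real.exp_add]; simp
      have hD : (exp (v - v^2) * (1 - 2*v) + exp (-v) * (-1)) * exp v ≤ 0 := by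
        nlinarith [hkey, hh, hh2]
      nlinarith [hD, exp_pos v]
  have h2 : (fun v : ℝ => exp (v - v^2) + exp (-v)) u ≤ (fun v : ℝ => exp (v - v^2) + exp (-v)) 0 :=
    key (Set.mem_Icc.mpr ⟨le_refl 0, by norm_num⟩) (Set.mem_Icc.mpr ⟨hu0, hu1⟩) hu0
  simp only at h2
  norm_num at h2
  linarith

lemma exp_quarter_le : exp (1/4 : ℝ) ≤ 1.2841 := by
  have h4 : exp (1/4 : ℝ)^(4:ℕ) = exp 1 := by
    rw [← Real.exp_nat_mul]; norm_num
  have : exp (1/4 : ℝ)^(4:ℕ) ≤ (1.2841:ℝ)^(4:ℕ) := by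
    rw [h4]; nlinarith [Real.exp_one_lt_d9]
  exact (pow_le_pow_iff_left₀ (exp_pos _).le (by norm_num) (by norm_num)).mp this

lemma exp_neg_half_le : exp (-(1/2) : ℝ) ≤ 0.6067 := by
  have h2 : exp (1/2 : ℝ)^(2:ℕ) = exp 1 := by
    rw [← Real.exp_nat_mul]; norm_num
  have hge : (1.6485:ℝ) ≤ exp (1/2) := by
    have : (1.6485:ℝ)^(2:ℕ) ≤ exp (1/2 : ℝ)^(2:ℕ) := by
      rw [h2]; nlinarith [Real.exp_one_gt_d9]
    exact (pow_le_pow_iff_left₀ (by norm_num) (exp_pos _).le (by norm_num)).mp this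
  rw [Real.exp_neg]
  calc (exp (1/2:ℝ))⁻¹ ≤ (1.6485:ℝ)⁻¹ := by
        exact inv_anti₀ (by norm_num) hge
  _ ≤ 0.6067 := by norm_num

lemma holder_two {ι : Type*} [Fintype ι] [Nonempty ι] (F G : ι → ℝ)
    (hF : ∀ i, 0 < F i) (hG : ∀ i, 0 < G i)
    {l : ℝ} (hl0 : 0 < l) (hl1 : l < 1) :
    ∑ i, (F i)^l * (G i)^(1-l) ≤ (∑ i, F i)^l * (∑ i, G i)^(1-l) := by
  have hSF : 0 < ∑ i, F i := Finset.sum_pos (fun i _ => hF i) univ_nonempty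
  have hSG : 0 < ∑ i, G i := Finset.sum_pos (fun i _ => hG i) univ_nonempty
  have h1 : ∀ i, (F i / ∑ j, F j)^l * (G i / ∑ j, G j)^(1-l)
      ≤ l * (F i / ∑ j, F j) + (1-l) * (G i / ∑ j, G j) :=
    fun i => Real.geom_mean_le_arith_mean2_weighted hl0.le (by linarith)
      (div_nonneg (hF i).le hSF.le) (div_nonneg (hG i).le hSG.le) (by ring)
  have h2 : ∑ i, (F i / ∑ j, F j)^l * (G i / ∑ j, G j)^(1-l) ≤ 1 := by
    calc ∑ i, (F i / ∑ j, F j)^l * (G i / ∑ j, G j)^(1-l)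
        ≤ ∑ i, (l * (F i / ∑ j, F j) + (1-l) * (G i / ∑ j, G j)) :=
          Finset.sum_le_sum fun i _ => h1 i
    _ = 1 := by
        rw [Finset.sum_add_distrib, ← Finset.mul_sum, ← Finset.mul_sum,
          ← Finset.sum_div, ← Finset.sum_div, div_self hSF.ne', div_self hSG.ne']
        ring
  have h3 : ∀ i, (F i / ∑ j, F j)^l * (G i / ∑ j, G j)^(1-l)
      = ((F i)^l * (G i)^(1-l)) / ((∑ j, F j)^l * (∑ j, G j)^(1-l)) := by
    intro i
    rw [Real.div_rpow (hF i).le hSF.le, Real.div_rpow (hG i).le hSG.le]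
    ring
  rw [Finset.sum_congr rfl (fun i _ => h3 i), ← Finset.sum_div] at h2
  have hpos : 0 < (∑ j, F j)^l * (∑ j, G j)^(1-l) :=
    mul_pos (Real.rpow_pos_of_pos hSF _) (Real.rpow_pos_of_pos hSG _)
  exact (div_le_one hpos).mp h2


theorem talagrand : ∀ (n : ℕ) (A : Finset (Cube n)), A.Nonempty →
    ∑ x, exp (dst A x / 4) ≤ (4:ℝ)^n / A.card := by
  intro n
  induction n with
  | zero =>
    intro A hA
    have hcard1 : Fintype.card (Cube 0) = 1 := by simp
    have h1 : A.card = 1 := by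
      have hle := Finset.card_le_univ A
      rw [hcard1] at hle
      have := hA.card_pos
      omega
    have h2 : ∀ x : Cube 0, dst A x = 0 := by
      intro x; rw [dst, Phi]; simp
    calc ∑ x, exp (dst A x/4) = ∑ _x : Cube 0, (1:ℝ) := by
          apply Finset.sum_congr rfl; intro x _; rw [h2 x]; norm_num
    _ = 1 := by rw [Finset.sum_const, Finset.card_univ, hcard1]; norm_num
    _ ≤ (4:ℝ)^0/A.card := by rw [h1]; norm_num
  | succ n ih =>
    intro A hA
    have hB : (Bfib A).Nonempty := by
      obtain ⟨x, hx⟩ := hA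
      refine ⟨Fin.tail x, ?_⟩
      have hx' : (Fin.cons (x 0) (Fin.tail x) : Cube (n+1)) ∈ A := by
        rw [Fin.cons_self_tail]; exact hx
      cases hx0 : x 0
      · exact Finset.mem_union.mpr (Or.inl (mem_fib.mpr (by rwa [← hx0])))
      · exact Finset.mem_union.mpr (Or.inr (mem_fib.mpr (by rwa [← hx0])))
    have hBpos : (0:ℝ) < ((Bfib A).card : ℝ) := by exact_mod_cast hB.card_pos
    have hfibsub : ∀ b, fib A b ⊆ Bfib A := by
      intro b; cases b
      exacts [Finset.subset_union_left, Finset.subset_union_right]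
    have hcard : A.card = (fib A false).card + (fib A true).card := by
      have h1 : A.card = ∑ x : Cube (n+1), if x ∈ A then 1 else 0 := by
        rw [Finset.sum_ite_mem, Finset.univ_inter]; simp
      rw [h1, sum_cube_succ (fun x => if x ∈ A then (1:ℕ) else 0), Fintype.sum_bool]
      have h2 : ∀ b, (fib A b).card = ∑ z : Cube n, if (Fin.cons b z : Cube (n+1)) ∈ A then 1 else 0 :=
        fun b => Finset.card_filter _ _
      rw [h2, h2]; omega
    set β : ℝ := ((Bfib A).card : ℝ) with hβdef
    have main : ∀ b : Bool, ∑ z : Cube n, exp (dst A (Fin.cons b z) / 4)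
        ≤ (2 - ((fib A b).card : ℝ)/β) * ((4:ℝ)^n / β) := by
      intro b
      set ab : ℝ := ((fib A b).card : ℝ) with hab
      have habnn : 0 ≤ ab := by positivity
      have hr1 : ab ≤ β := by
        rw [hab, hβdef]; exact_mod_cast Finset.card_le_card (hfibsub b)
      have hIHB : ∑ z : Cube n, exp (dst (Bfib A) z / 4) ≤ (4:ℝ)^n / β := ih (Bfib A) hB
      have hQ : (0:ℝ) < (4:ℝ)^n := by positivity
      have hQβ : (0:ℝ) < (4:ℝ)^n / β := div_pos hQ hBpos
      by_cases hcase : ab / β ≤ exp (-(1/2):ℝ)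
      · have hpt : ∀ z, exp (dst A (Fin.cons b z) / 4) ≤ exp (1/4:ℝ) * exp (dst (Bfib A) z / 4) := by
          intro z
          have hd := dst_cons_le A b z 0 le_rfl (by norm_num) hB (fun h => absurd h (lt_irrefl 0))
          rw [← Real.exp_add]
          apply Real.exp_le_exp.mpr
          have := dst_nonneg (fib A b) z
          nlinarith [hd]
        calc ∑ z : Cube n, exp (dst A (Fin.cons b z)/4)
            ≤ ∑ z : Cube n, exp (1/4:ℝ) * exp (dst (Bfib A) z/4) :=
              Finset.sum_le_sum (fun z _ => hpt z)
        _ = exp (1/4:ℝ) * ∑ z : Cube n, exp (dst (Bfib A) z/4) := by rw [Finset.mul_sum]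
        _ ≤ exp (1/4:ℝ) * ((4:ℝ)^n/β) := mul_le_mul_of_nonneg_left hIHB (exp_pos _).le
        _ ≤ (2 - ab/β) * ((4:ℝ)^n/β) := by
            apply mul_le_mul_of_nonneg_right _ hQβ.le
            linarith [exp_quarter_le, exp_neg_half_le, hcase]
      · push_neg at hcase
        have hrpos : 0 < ab / β := lt_trans (exp_pos _) hcase
        have habpos : 0 < ab := by
          have := mul_pos hrpos hBpos
          rwa [div_mul_cancel₀ _ hBpos.ne'] at this
        have habN : 0 < (fib A b).card := by
          by_contra hc
          push_neg at hc
          have h0 : (fib A b).card = 0 := Nat.le_zero.mp hc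
          rw [hab, h0] at habpos
          norm_num at habpos
        have hfibne : (fib A b).Nonempty := Finset.card_pos.mp habN
        have hrle1 : ab/β ≤ 1 := by rw [div_le_one hBpos]; exact hr1
        set r : ℝ := ab/β with hrdef
        set u : ℝ := -Real.log r with hu
        have hu0 : 0 ≤ u := by rw [hu]; linarith [Real.log_nonpos hrpos.le hrle1]
        have hu12 : u < 1/2 := by
          have : -(1/2:ℝ) < Real.log r := (Real.lt_log_iff_exp_lt hrpos).mpr hcase
          rw [hu]; linarith
        set l : ℝ := 1 - 2*u with hl
        have hl0 : 0 < l := by rw [hl]; linarith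
        have hl1 : l ≤ 1 := by rw [hl]; linarith
        have hIHf : ∑ z : Cube n, exp (dst (fib A b) z / 4) ≤ (4:ℝ)^n / ab := ih _ hfibne
        have hpt : ∀ z, exp (dst A (Fin.cons b z)/4)
            ≤ exp (u^2) * ((exp (dst (fib A b) z/4))^l * (exp (dst (Bfib A) z/4))^(1-l)) := by
          intro z
          have hd := dst_cons_le A b z l hl0.le hl1 hB (fun _ => hfibne)
          have e1 : (exp (dst (fib A b) z/4))^l = exp (l * (dst (fib A b) z/4)) := by
            rw [← Real.exp_mul]; ring_nf
          have e2 : (exp (dst (Bfib A) z/4))^(1-l) = exp ((1-l) * (dst (Bfib A) z/4)) := by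
            rw [← Real.exp_mul]; ring_nf
          rw [e1, e2, ← Real.exp_add, ← Real.exp_add]
          apply Real.exp_le_exp.mpr
          have h1l : (1-l)^2 = 4*u^2 := by rw [hl]; ring
          calc dst A (Fin.cons b z)/4
              ≤ ((1-l)^2 + l * dst (fib A b) z + (1-l) * dst (Bfib A) z)/4 :=
                div_le_div_of_nonneg_right hd (by norm_num)
          _ = u^2 + (l * (dst (fib A b) z/4) + ((1-l) * (dst (Bfib A) z/4))) := by
              rw [h1l]; ring
        have hH : ∑ z : Cube n, (exp (dst (fib A b) z/4))^l * (exp (dst (Bfib A) z/4))^(1-l)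
            ≤ (∑ z : Cube n, exp (dst (fib A b) z/4))^l
              * (∑ z : Cube n, exp (dst (Bfib A) z/4))^(1-l) := by
          rcases eq_or_lt_of_le hl1 with h|h
          · simp [h, Real.rpow_one]
          · exact holder_two _ _ (fun z => exp_pos _) (fun z => exp_pos _) hl0 h
        have hmono : (∑ z : Cube n, exp (dst (fib A b) z/4))^l
              * (∑ z : Cube n, exp (dst (Bfib A) z/4))^(1-l)
            ≤ ((4:ℝ)^n/ab)^l * ((4:ℝ)^n/β)^(1-l) := by
          have hf1 : (0:ℝ) ≤ ∑ z : Cube n, exp (dst (fib A b) z/4) :=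
            Finset.sum_nonneg fun z _ => (exp_pos _).le
          have hf2 : (0:ℝ) ≤ ∑ z : Cube n, exp (dst (Bfib A) z/4) :=
            Finset.sum_nonneg fun z _ => (exp_pos _).le
          apply mul_le_mul (Real.rpow_le_rpow hf1 hIHf hl0.le)
            (Real.rpow_le_rpow hf2 hIHB (by linarith)) (Real.rpow_nonneg hf2 _)
            (Real.rpow_nonneg (div_pos hQ habpos).le _)
        have halg : ((4:ℝ)^n/ab)^l * ((4:ℝ)^n/β)^(1-l) = ((4:ℝ)^n/β) * r⁻¹^l := by
          have hsp : (4:ℝ)^n/ab = ((4:ℝ)^n/β) * r⁻¹ := by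
            rw [hrdef, inv_div, div_mul_div_comm]
            rw [div_eq_div_iff habpos.ne' (mul_pos hBpos habpos).ne']
            ring
          rw [hsp, Real.mul_rpow hQβ.le (inv_nonneg.mpr hrpos.le), mul_right_comm,
            ← Real.rpow_add hQβ]
          norm_num
        have hfinal : exp (u^2) * (((4:ℝ)^n/β) * r⁻¹^l) ≤ (2 - r) * ((4:ℝ)^n/β) := by
          have hrexp : r = exp (-u) := by rw [hu, neg_neg, Real.exp_log hrpos]
          have h5 : r⁻¹^l = exp (u * l) := by
            rw [hrexp, ← Real.exp_neg, neg_neg, ← Real.exp_mul]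
          have h6 : exp (u^2) * exp (u*l) = exp (u - u^2) := by
            rw [← Real.exp_add]; congr 1; rw [hl]; ring
          have h7 : exp (u - u^2) ≤ 2 - r := by
            have := L_ineq hu0 hu12.le; rw [hrexp]; linarith
          calc exp (u^2) * (((4:ℝ)^n/β) * r⁻¹^l)
              = (exp (u^2) * exp (u*l)) * ((4:ℝ)^n/β) := by rw [h5]; ring
          _ = exp (u-u^2) * ((4:ℝ)^n/β) := by rw [h6]
          _ ≤ (2-r) * ((4:ℝ)^n/β) := mul_le_mul_of_nonneg_right h7 hQβ.le
        calc ∑ z : Cube n, exp (dst A (Fin.cons b z)/4)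
            ≤ ∑ z : Cube n, exp (u^2) * ((exp (dst (fib A b) z/4))^l * (exp (dst (Bfib A) z/4))^(1-l)) :=
              Finset.sum_le_sum (fun z _ => hpt z)
        _ = exp (u^2) * ∑ z : Cube n, (exp (dst (fib A b) z/4))^l * (exp (dst (Bfib A) z/4))^(1-l) := by
              rw [Finset.mul_sum]
        _ ≤ exp (u^2) * (((4:ℝ)^n/ab)^l * ((4:ℝ)^n/β)^(1-l)) :=
              mul_le_mul_of_nonneg_left (hH.trans hmono) (exp_pos _).le
        _ = exp (u^2) * (((4:ℝ)^n/β) * r⁻¹^l) := by rw [halg]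
        _ ≤ (2 - r) * ((4:ℝ)^n/β) := hfinal
    rw [sum_cube_succ (fun x => exp (dst A x/4)), Fintype.sum_bool]
    have hle := add_le_add (main true) (main false)
    have hcardR : (A.card:ℝ) = ((fib A false).card:ℝ) + ((fib A true).card:ℝ) := by
      exact_mod_cast hcard
    have haf : (0:ℝ) ≤ ((fib A false).card:ℝ) := by positivity
    have hat : (0:ℝ) ≤ ((fib A true).card:ℝ) := by positivity
    have hafle : ((fib A false).card:ℝ) ≤ β := by
      rw [hβdef]; exact_mod_cast Finset.card_le_card (hfibsub false)
    have hatle : ((fib A true).card:ℝ) ≤ β := by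
      rw [hβdef]; exact_mod_cast Finset.card_le_card (hfibsub true)
    have hApos : (0:ℝ) < (A.card:ℝ) := by exact_mod_cast hA.card_pos
    refine le_trans hle ?_
    rw [hcardR]
    set af := ((fib A false).card:ℝ)
    set at' := ((fib A true).card:ℝ)
    have hαpos : 0 < af + at' := by rw [← hcardR]; exact hApos
    have hQ : (0:ℝ) < (4:ℝ)^n := by positivity
    have hgoal : (2 - at'/β)*((4:ℝ)^n/β) + (2 - af/β)*((4:ℝ)^n/β)
        = ((4*β - (af+at'))*(4:ℝ)^n)/β^2 := by
      field_simp
      ring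
    rw [hgoal]
    have h4n1 : (4:ℝ)^(n+1) = 4*(4:ℝ)^n := by ring
    rw [h4n1, div_le_div_iff₀ (pow_pos hBpos 2) hαpos]
    nlinarith [mul_nonneg hQ.le (sq_nonneg (2*β - (af+at'))), sq_nonneg (2*β - (af+at'))]
def eps {d : ℕ} (s : Cube d) (a : Fin d) : ℝ := if s a then 1 else -1

lemma eps_sq {d} (s : Cube d) (a) : eps s a * eps s a = 1 := by
  unfold eps; split <;> norm_num

lemma eps_sq' {d} (s : Cube d) (a) : eps s a ^ 2 = 1 := by
  rw [sq]; exact eps_sq s a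

def flip {d : ℕ} (x : Fin d) (s : Cube d) : Cube d := Function.update s x (!(s x))

lemma flip_flip {d} (x : Fin d) (s : Cube d) : flip x (flip x s) = s := by
  funext y
  by_cases h : y = x
  · subst h; simp [flip, Function.update]
  · simp [flip, Function.update, h]

lemma eps_flip {d} (x : Fin d) (s : Cube d) (y : Fin d) :
    eps (flip x s) y = if y = x then -eps s y else eps s y := by
  by_cases h : y = x
  · subst h; simp [flip, eps, Function.update]
    cases s y <;> norm_num
  · simp [flip, eps, Function.update, h]

lemma sum_flip {d} (x : Fin d) (F : Cube d → ℝ) : ∑ s, F (flip x s) = ∑ s, F s :=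
  Fintype.sum_bijective (flip x)
    (Function.Involutive.bijective (fun s => flip_flip x s)) _ _ (fun s => rfl)

lemma sum_eps_zero {d} (x : Fin d) (F : Cube d → ℝ) (h : ∀ s, F (flip x s) = -F s) :
    ∑ s, F s = 0 := by
  have h1 : ∑ s, F s = ∑ s, F (flip x s) := (sum_flip x F).symm
  have h2 : ∑ s : Cube d, F (flip x s) = -∑ s, F s := by
    rw [← Finset.sum_neg_distrib]
    exact Finset.sum_congr rfl fun s _ => h s
  linarith [h1, h2]

lemma card_cube (d : ℕ) : Fintype.card (Cube d) = 2^d := by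
  simp [Fintype.card_fun]

lemma sum_one_cube (d : ℕ) : ∑ _s : Cube d, (1:ℝ) = 2^d := by
  rw [Finset.sum_const, card_univ, card_cube]; simp

lemma sum_eps_pair {d} (a b : Fin d) :
    ∑ s : Cube d, eps s a * eps s b = if a = b then (2^d:ℝ) else 0 := by
  by_cases h : a = b
  · subst h
    rw [if_pos rfl, ← sum_one_cube d]
    exact Finset.sum_congr rfl fun s _ => eps_sq s a
  · rw [if_neg h]
    apply sum_eps_zero a
    intro s
    simp only [eps_flip]
    simp [Ne.symm h]

lemma quad {d} (a b a' b' : Fin d) (hab : a ≠ b) (hab' : a' ≠ b') :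
    ∑ s : Cube d, eps s a * eps s b * (eps s a' * eps s b')
      = if (a = a' ∧ b = b') ∨ (a = b' ∧ b = a') then (2^d:ℝ) else 0 := by
  by_cases h1 : (a = a' ∧ b = b') ∨ (a = b' ∧ b = a')
  · rw [if_pos h1, ← sum_one_cube d]
    apply Finset.sum_congr rfl
    intro s _
    rcases h1 with ⟨h2, h3⟩|⟨h2, h3⟩
    · rw [← h2, ← h3]
      calc eps s a * eps s b * (eps s a * eps s b)
            = (eps s a * eps s a) * (eps s b * eps s b) := by ring
      _ = 1 := by rw [eps_sq, eps_sq, one_mul]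
    · rw [← h2, ← h3]
      calc eps s a * eps s b * (eps s b * eps s a)
            = (eps s a * eps s a) * (eps s b * eps s b) := by ring
      _ = 1 := by rw [eps_sq, eps_sq, one_mul]
  · rw [if_neg h1]
    push_neg at h1
    by_cases ha1 : a = a'
    · apply sum_eps_zero b
      intro s
      have h2 : b ≠ b' := h1.1 ha1
      have h3 : b ≠ a' := ha1 ▸ (Ne.symm hab)
      simp only [eps_flip]
      simp [hab, Ne.symm h3, Ne.symm h2]
    · by_cases ha2 : a = b'
      · apply sum_eps_zero b
        intro s
        have h2 : b ≠ a' := h1.2 ha2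
        have h3 : b ≠ b' := ha2 ▸ (Ne.symm hab)
        simp only [eps_flip]
        simp [hab, Ne.symm h2, Ne.symm h3]
      · apply sum_eps_zero a
        intro s
        simp only [eps_flip]
        simp [Ne.symm hab, Ne.symm ha1, Ne.symm ha2]

section Moments
variable {d k : ℕ} (c : Fin k → Fin d → ℝ)

def Xv (c : Fin k → Fin d → ℝ) (i : Fin k) (s : Cube d) : ℝ := ∑ a, c i a * eps s a
def Sv (c : Fin k → Fin d → ℝ) (s : Cube d) : ℝ := ∑ i, (Xv c i s)^2
def Mm (c : Fin k → Fin d → ℝ) (a b : Fin d) : ℝ := ∑ i, c i a * c i b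

variable (hortho : ∀ i j, ∑ a, c i a * c j a = if i = j then (1:ℝ) else 0)

lemma Mm_symm (a b : Fin d) : Mm c a b = Mm c b a :=
  Finset.sum_congr rfl fun i _ => mul_comm _ _

include hortho

lemma Mm_trace : ∑ a, Mm c a a = (k:ℝ) := by
  unfold Mm
  rw [Finset.sum_comm]
  have h : ∀ i : Fin k, ∑ a, c i a * c i a = 1 := fun i => by
    have := hortho i i; simpa using this
  rw [Finset.sum_congr rfl fun i _ => h i, Finset.sum_const, card_univ, Fintype.card_fin]
  simp

lemma Mm_idem (a a' : Fin d) : ∑ b, Mm c a b * Mm c a' b = Mm c a a' := by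
  unfold Mm
  have h1 : ∀ b, (∑ i, c i a * c i b) * (∑ j, c j a' * c j b)
      = ∑ i, ∑ j, (c i a * c j a') * (c i b * c j b) := by
    intro b
    rw [Finset.sum_mul_sum]
    exact Finset.sum_congr rfl fun i _ => Finset.sum_congr rfl fun j _ => by ring
  rw [Finset.sum_congr rfl fun b _ => h1 b, Finset.sum_comm]
  apply Finset.sum_congr rfl; intro i _
  rw [Finset.sum_comm]
  have h2 : ∀ j, ∑ b, c i a * c j a' * (c i b * c j b)
      = c i a * c j a' * (if i = j then (1:ℝ) else 0) := by
    intro j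
    rw [← Finset.mul_sum]
    congr 1
    rw [← hortho i j]
  rw [Finset.sum_congr rfl fun j _ => h2 j]
  simp only [mul_ite, mul_one, mul_zero]
  rw [Finset.sum_ite_eq]
  simp only [Finset.mem_univ, ite_true]

lemma Mm_HS : ∑ a, ∑ b, (Mm c a b)^2 = (k:ℝ) := by
  have h1 : ∀ a, ∑ b, (Mm c a b)^2 = Mm c a a := by
    intro a
    rw [← Mm_idem c hortho a a]
    exact Finset.sum_congr rfl fun b _ => by rw [sq]
  rw [Finset.sum_congr rfl fun a _ => h1 a]
  exact Mm_trace c hortho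

omit hortho in
lemma Sv_eq (s : Cube d) : Sv c s = ∑ a, ∑ b, Mm c a b * (eps s a * eps s b) := by
  unfold Sv Xv Mm
  have h1 : ∀ i : Fin k, (∑ a, c i a * eps s a)^2
      = ∑ a, ∑ b, (c i a * c i b) * (eps s a * eps s b) := by
    intro i
    rw [sq, Finset.sum_mul_sum]
    exact Finset.sum_congr rfl fun a _ => Finset.sum_congr rfl fun b _ => by ring
  rw [Finset.sum_congr rfl fun i _ => h1 i, Finset.sum_comm]
  apply Finset.sum_congr rfl; intro a _
  rw [Finset.sum_comm]
  apply Finset.sum_congr rfl; intro b _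
  rw [Finset.sum_mul]

omit hortho in
lemma sum_offdiag_split (F : Fin d → Fin d → ℝ) :
    ∑ a, ∑ b, F a b = (∑ a, F a a) + ∑ p ∈ (univ : Finset (Fin d)).offDiag, F p.1 p.2 := by
  have h1 : ∑ a, ∑ b, F a b = ∑ p ∈ (univ : Finset (Fin d)) ×ˢ univ, F p.1 p.2 := by
    rw [Finset.sum_product]
  rw [h1, ← Finset.diag_union_offDiag (univ : Finset (Fin d)),
    Finset.sum_union (Finset.disjoint_diag_offDiag _), Finset.sum_diag]

lemma Sv_sub (s : Cube d) :
    Sv c s - (k:ℝ) = ∑ p ∈ (univ : Finset (Fin d)).offDiag,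
      Mm c p.1 p.2 * (eps s p.1 * eps s p.2) := by
  rw [Sv_eq c s, sum_offdiag_split (fun a b => Mm c a b * (eps s a * eps s b))]
  have h2 : ∑ a, Mm c a a * (eps s a * eps s a) = (k:ℝ) := by
    rw [Finset.sum_congr rfl fun a _ => by rw [eps_sq, mul_one]]
    exact Mm_trace c hortho
  rw [h2]; ring

lemma sum_Sv : ∑ s : Cube d, Sv c s = 2^d * k := by
  calc ∑ s : Cube d, Sv c s
      = ∑ s : Cube d, ∑ a, ∑ b, Mm c a b * (eps s a * eps s b) :=
        Finset.sum_congr rfl fun s _ => Sv_eq c s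
  _ = ∑ a, ∑ s : Cube d, ∑ b, Mm c a b * (eps s a * eps s b) := Finset.sum_comm
  _ = ∑ a, ∑ b, ∑ s : Cube d, Mm c a b * (eps s a * eps s b) :=
        Finset.sum_congr rfl fun a _ => Finset.sum_comm
  _ = ∑ a, ∑ b, Mm c a b * ∑ s : Cube d, eps s a * eps s b := by
        apply Finset.sum_congr rfl; intro a _
        exact Finset.sum_congr rfl fun b _ => (Finset.mul_sum _ _ _).symm
  _ = ∑ a, Mm c a a * 2^d := by
        apply Finset.sum_congr rfl; intro a _
        rw [Finset.sum_congr rfl fun b _ => by rw [sum_eps_pair]]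
        simp only [mul_ite, mul_zero]
        rw [Finset.sum_ite_eq]
        simp
  _ = 2^d * k := by rw [← Finset.sum_mul, Mm_trace c hortho]; ring

lemma sum_Sv_var : ∑ s : Cube d, (Sv c s - k)^2 ≤ 2^d * (2*k) := by
  set OD := (univ : Finset (Fin d)).offDiag with hOD
  have hexp : ∀ s : Cube d, (Sv c s - k)^2
      = ∑ p ∈ OD, ∑ q ∈ OD, (Mm c p.1 p.2 * Mm c q.1 q.2)
          * (eps s p.1 * eps s p.2 * (eps s q.1 * eps s q.2)) := by
    intro s
    rw [Sv_sub c hortho s, sq, Finset.sum_mul_sum]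
    exact Finset.sum_congr rfl fun p _ => Finset.sum_congr rfl fun q _ => by ring
  have hswap : ∑ s : Cube d, (Sv c s - k)^2
      = ∑ p ∈ OD, ∑ q ∈ OD, (Mm c p.1 p.2 * Mm c q.1 q.2)
          * (∑ s : Cube d, eps s p.1 * eps s p.2 * (eps s q.1 * eps s q.2)) := by
    rw [Finset.sum_congr rfl fun s _ => hexp s, Finset.sum_comm]
    apply Finset.sum_congr rfl; intro p _
    rw [Finset.sum_comm]
    exact Finset.sum_congr rfl fun q _ => (Finset.mul_sum _ _ _).symm
  have hswapne : ∀ p : Fin d × Fin d, p ∈ OD → p.swap ∈ OD := by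
    intro p hp
    rcases Finset.mem_offDiag.mp hp with ⟨_, _, hne⟩
    exact Finset.mem_offDiag.mpr ⟨mem_univ _, mem_univ _, Ne.symm hne⟩
  have hinner : ∀ p ∈ OD, ∑ q ∈ OD, (Mm c p.1 p.2 * Mm c q.1 q.2)
          * (∑ s : Cube d, eps s p.1 * eps s p.2 * (eps s q.1 * eps s q.2))
      = 2 * ((Mm c p.1 p.2)^2 * 2^d) := by
    intro p hp
    rcases Finset.mem_offDiag.mp hp with ⟨_, _, hpne⟩
    have hps : p ≠ p.swap := by
      intro h
      exact hpne (congrArg Prod.fst h ▸ rfl)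
    have hterm : ∀ q ∈ OD, (Mm c p.1 p.2 * Mm c q.1 q.2)
          * (∑ s : Cube d, eps s p.1 * eps s p.2 * (eps s q.1 * eps s q.2))
        = (if q = p then (Mm c p.1 p.2)^2 * 2^d else 0)
          + (if q = p.swap then (Mm c p.1 p.2)^2 * 2^d else 0) := by
      intro q hq
      rcases Finset.mem_offDiag.mp hq with ⟨_, _, hqne⟩
      rw [quad p.1 p.2 q.1 q.2 hpne hqne]
      by_cases h1 : q = p
      · subst h1
        rw [if_pos (Or.inl ⟨rfl, rfl⟩), if_pos rfl, if_neg hps, sq]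
        ring
      · by_cases h2 : q = p.swap
        · subst h2
          rw [if_pos (Or.inr ⟨rfl, rfl⟩), if_neg h1, if_pos rfl]
          have hs : Mm c p.swap.1 p.swap.2 = Mm c p.1 p.2 := Mm_symm c p.2 p.1
          rw [hs, sq]
          ring
        · rw [if_neg ?_, if_neg h1, if_neg h2, add_zero, mul_zero]
          rintro (⟨ha, hb⟩|⟨ha, hb⟩)
          · exact h1 (Prod.ext ha.symm hb.symm)
          · exact h2 (Prod.ext hb.symm ha.symm)
    rw [Finset.sum_congr rfl hterm, Finset.sum_add_distrib,
      Finset.sum_ite_eq' OD p _, Finset.sum_ite_eq' OD p.swap _,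
      if_pos hp, if_pos (hswapne p hp)]
    ring
  rw [hswap, Finset.sum_congr rfl hinner]
  have hle : ∑ p ∈ OD, (Mm c p.1 p.2)^2 ≤ (k:ℝ) := by
    have hsub2 : OD ⊆ (univ : Finset (Fin d)) ×ˢ univ := fun p _ =>
      Finset.mem_product.mpr ⟨mem_univ _, mem_univ _⟩
    calc ∑ p ∈ OD, (Mm c p.1 p.2)^2 ≤ ∑ p ∈ (univ : Finset (Fin d)) ×ˢ univ, (Mm c p.1 p.2)^2 :=
          Finset.sum_le_sum_of_subset_of_nonneg hsub2 (fun p _ _ => sq_nonneg _)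
    _ = ∑ a, ∑ b, (Mm c a b)^2 := by rw [Finset.sum_product]
    _ = k := Mm_HS c hortho
  calc ∑ p ∈ OD, 2*((Mm c p.1 p.2)^2 * 2^d)
      = (2*2^d) * ∑ p ∈ OD, (Mm c p.1 p.2)^2 := by
        rw [Finset.mul_sum]
        exact Finset.sum_congr rfl fun p _ => by ring
  _ ≤ (2*2^d) * k := mul_le_mul_of_nonneg_left hle (by positivity)
  _ = 2^d * (2*k) := by ring
lemma bessel (v : Fin d → ℝ) : ∑ i, (∑ a, c i a * v a)^2 ≤ ∑ a, (v a)^2 := by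
  set T : ℝ := ∑ a, ∑ b, (v a * v b) * Mm c a b with hT
  have h1 : ∑ i, (∑ a, c i a * v a)^2 = T := by
    rw [hT]
    have he : ∀ i : Fin k, (∑ a, c i a * v a)^2
        = ∑ a, ∑ b, (v a * v b) * (c i a * c i b) := by
      intro i
      rw [sq, Finset.sum_mul_sum]
      exact Finset.sum_congr rfl fun a _ => Finset.sum_congr rfl fun b _ => by ring
    rw [Finset.sum_congr rfl fun i _ => he i, Finset.sum_comm]
    apply Finset.sum_congr rfl; intro a _
    rw [Finset.sum_comm]
    apply Finset.sum_congr rfl; intro b _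
    unfold Mm
    rw [Finset.mul_sum]
  have h4 : ∑ a, v a * (∑ b, Mm c a b * v b) = T := by
    rw [hT]
    apply Finset.sum_congr rfl; intro a _
    rw [Finset.mul_sum]
    exact Finset.sum_congr rfl fun b _ => by ring
  have h2 : ∑ a, (∑ b, Mm c a b * v b)^2 = T := by
    have he : ∀ a, (∑ b, Mm c a b * v b)^2
        = ∑ b, ∑ b', (v b * v b') * (Mm c a b * Mm c a b') := by
      intro a
      rw [sq, Finset.sum_mul_sum]
      exact Finset.sum_congr rfl fun b _ => Finset.sum_congr rfl fun b' _ => by ring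
    rw [Finset.sum_congr rfl fun a _ => he a, Finset.sum_comm]
    have hmid : ∀ b, ∑ a, ∑ b', v b * v b' * (Mm c a b * Mm c a b')
        = ∑ b', v b * v b' * Mm c b b' := by
      intro b
      rw [Finset.sum_comm]
      apply Finset.sum_congr rfl; intro b' _
      rw [← Finset.mul_sum]
      congr 1
      rw [← Mm_idem c hortho b b']
      apply Finset.sum_congr rfl; intro a _
      rw [Mm_symm c a b, Mm_symm c a b']
    rw [Finset.sum_congr rfl fun b _ => hmid b]
  have h5 : (0:ℝ) ≤ ∑ a, (v a - ∑ b, Mm c a b * v b)^2 :=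
    Finset.sum_nonneg fun a _ => sq_nonneg _
  have h6 : ∑ a, (v a - ∑ b, Mm c a b * v b)^2
      = ∑ a, (v a)^2 - 2*T + T := by
    have he : ∀ a, (v a - ∑ b, Mm c a b * v b)^2
        = (v a)^2 - 2*(v a * (∑ b, Mm c a b * v b)) + (∑ b, Mm c a b * v b)^2 := fun a => by ring
    rw [Finset.sum_congr rfl fun a _ => he a, Finset.sum_add_distrib, Finset.sum_sub_distrib,
      ← Finset.mul_sum, h4, h2]
  rw [h6] at h5
  rw [h1]
  linarith
end Moments

lemma eps_chi {d : ℕ} (x y : Cube d) (a : Fin d) : |eps x a - eps y a| = 2 * chi x y a := by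
  unfold eps chi
  cases hx : x a <;> cases hy : y a <;> simp [hx, hy] <;> norm_num

lemma conv_bound {d k : ℕ} (c : Fin k → Fin d → ℝ)
    (hortho : ∀ i j, ∑ a, c i a * c j a = if i = j then (1:ℝ) else 0)
    (A : Finset (Cube d)) (hA : A.Nonempty) (α0 : ℝ) (hα0 : 0 ≤ α0)
    (hAb : ∀ y ∈ A, Real.sqrt (Sv c y) ≤ α0) (x : Cube d) :
    Real.sqrt (Sv c x) ≤ α0 + 2 * Real.sqrt (dst A x) := by
  classical
  set w : Cube d → ℝ := optw A x with hw
  have hWt : Wt A w := optw_wt hA x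
  set V : Cube d → EuclideanSpace ℝ (Fin k) := fun y => WithLp.toLp 2 (fun i => Xv c i y) with hV
  have hnorm : ∀ y, ‖V y‖ = Real.sqrt (Sv c y) := by
    intro y
    rw [EuclideanSpace.norm_eq]
    unfold Sv
    congr 1
    apply Finset.sum_congr rfl; intro i _
    rw [Real.norm_eq_abs, sq_abs]
  set B : EuclideanSpace ℝ (Fin k) := ∑ y, w y • V y with hB
  have h2 : ‖B‖ ≤ α0 := by
    rw [hB]
    calc ‖∑ y, w y • V y‖ ≤ ∑ y, ‖w y • V y‖ := norm_sum_le _ _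
    _ = ∑ y, w y * ‖V y‖ := Finset.sum_congr rfl fun y _ => by
          rw [norm_smul, Real.norm_eq_abs, abs_of_nonneg (hWt.1 y)]
    _ ≤ ∑ y, w y * α0 := by
          apply Finset.sum_le_sum
          intro y _
          by_cases hy : y ∈ A
          · exact mul_le_mul_of_nonneg_left (by rw [hnorm]; exact hAb y hy) (hWt.1 y)
          · rw [hWt.2.1 y hy]; simp
    _ = α0 := by rw [← Finset.sum_mul, hWt.2.2, one_mul]
  have hVB : ∀ i, V x i - B i = ∑ a, c i a * (∑ y, w y * (eps x a - eps y a)) := by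
    intro i
    have hBi : B i = ∑ y, w y * Xv c i y := by
      rw [hB, WithLp.ofLp_sum, Finset.sum_apply]
      rfl
    have hXx : Xv c i x = ∑ y, w y * Xv c i x := by rw [← Finset.sum_mul, hWt.2.2, one_mul]
    have hstep : V x i - B i = ∑ y, w y * (Xv c i x - Xv c i y) := by
      rw [Finset.sum_congr rfl (fun y (_ : y ∈ univ) => mul_sub (w y) (Xv c i x) (Xv c i y)),
        Finset.sum_sub_distrib, ← hXx, hBi]
    rw [hstep]
    calc ∑ y, w y * (Xv c i x - Xv c i y)
        = ∑ y, ∑ a, c i a * (w y * (eps x a - eps y a)) := by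
          apply Finset.sum_congr rfl; intro y _
          unfold Xv
          rw [← Finset.sum_sub_distrib, Finset.mul_sum]
          apply Finset.sum_congr rfl; intro a _
          ring
    _ = ∑ a, ∑ y, c i a * (w y * (eps x a - eps y a)) := Finset.sum_comm
    _ = ∑ a, c i a * (∑ y, w y * (eps x a - eps y a)) := by
          apply Finset.sum_congr rfl; intro a _
          rw [Finset.mul_sum]
  have h3 : ‖V x - B‖ ≤ 2 * Real.sqrt (dst A x) := by
    have hg : ∀ a, (∑ y, w y * (eps x a - eps y a))^2 ≤ (2 * vv x w a)^2 := by
      intro a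
      have habs : |∑ y, w y * (eps x a - eps y a)| ≤ 2 * vv x w a := by
        calc |∑ y, w y * (eps x a - eps y a)| ≤ ∑ y, |w y * (eps x a - eps y a)| :=
              Finset.abs_sum_le_sum_abs _ _
        _ = ∑ y, w y * |eps x a - eps y a| := Finset.sum_congr rfl fun y _ => by
              rw [abs_mul, abs_of_nonneg (hWt.1 y)]
        _ = ∑ y, w y * (2 * chi x y a) := Finset.sum_congr rfl fun y _ => by rw [eps_chi]
        _ = 2 * vv x w a := by
              unfold vv
              rw [Finset.mul_sum]
              apply Finset.sum_congr rfl; intro y _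
              ring
      have := pow_le_pow_left₀ (abs_nonneg _) habs 2
      rwa [sq_abs] at this
    have hnorm2 : ‖V x - B‖
        = Real.sqrt (∑ i, (∑ a, c i a * (∑ y, w y * (eps x a - eps y a)))^2) := by
      rw [EuclideanSpace.norm_eq]
      congr 1
      apply Finset.sum_congr rfl; intro i _
      rw [Real.norm_eq_abs, sq_abs]
      rw [show (V x - B) i = V x i - B i from rfl, hVB i]
    rw [hnorm2]
    have hb := bessel c hortho (fun a => ∑ y, w y * (eps x a - eps y a))
    have hΦ : ∑ a, (∑ y, w y * (eps x a - eps y a))^2 ≤ 4 * Phi x w := by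
      calc ∑ a, (∑ y, w y * (eps x a - eps y a))^2
          ≤ ∑ a, (2 * vv x w a)^2 := Finset.sum_le_sum fun a _ => hg a
      _ = 4 * Phi x w := by
          unfold Phi
          rw [Finset.mul_sum]
          exact Finset.sum_congr rfl fun a _ => by ring
    calc Real.sqrt (∑ i, (∑ a, c i a * (∑ y, w y * (eps x a - eps y a)))^2)
        ≤ Real.sqrt (4 * Phi x w) := Real.sqrt_le_sqrt (le_trans hb hΦ)
    _ = 2 * Real.sqrt (Phi x w) := by
        rw [show (4:ℝ) * Phi x w = (2:ℝ)^2 * Phi x w by ring,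
          Real.sqrt_mul (by positivity) _, Real.sqrt_sq (by norm_num : (0:ℝ) ≤ 2)]
    _ = 2 * Real.sqrt (dst A x) := by rw [dst, ← hw]
  calc Real.sqrt (Sv c x) = ‖V x‖ := (hnorm x).symm
  _ = ‖(V x - B) + B‖ := by rw [sub_add_cancel]
  _ ≤ ‖V x - B‖ + ‖B‖ := norm_add_le _ _
  _ ≤ 2 * Real.sqrt (dst A x) + α0 := add_le_add h3 h2
  _ = α0 + 2 * Real.sqrt (dst A x) := by ring

lemma pz_bound {d k : ℕ} (c : Fin k → Fin d → ℝ)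
    (hortho : ∀ i j, ∑ a, c i a * c j a = if i = j then (1:ℝ) else 0)
    (hk : 0 < k) (E : Finset (Cube d))
    (hE : ∀ s ∈ E, (Xv c ⟨0, hk⟩ s)^2 ≤ 1/2) :
    (E.card : ℝ) ≤ 11/12 * 2^d := by
  classical
  set i0 : Fin k := ⟨0, hk⟩ with hi0
  set c1 : Fin 1 → Fin d → ℝ := fun _ => c i0 with hc1
  have hortho1 : ∀ i j : Fin 1, ∑ a, c1 i a * c1 j a = if i = j then (1:ℝ) else 0 := by
    intro i j
    rw [if_pos (Subsingleton.elim i j)]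
    have h := hortho i0 i0
    rw [if_pos rfl] at h
    exact h
  set Y : Cube d → ℝ := fun s => Sv c1 s with hY
  have hYX : ∀ s, Y s = (Xv c i0 s)^2 := by
    intro s
    show ∑ i : Fin 1, (Xv c1 i s)^2 = Xv c i0 s ^ 2
    rw [Fin.sum_univ_one]
    rfl
  have hsum : ∑ s : Cube d, Y s = 2^d := by
    have h := sum_Sv c1 hortho1
    rw [hY]; rw [h]; norm_num
  have hvar : ∑ s : Cube d, (Y s - 1)^2 ≤ 2^d * 2 := by
    have h := sum_Sv_var c1 hortho1
    rw [hY]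
    calc ∑ s : Cube d, (Sv c1 s - 1)^2 = ∑ s : Cube d, (Sv c1 s - ((1:ℕ):ℝ))^2 := by norm_num
    _ ≤ 2^d * (2*((1:ℕ):ℝ)) := h
    _ = 2^d * 2 := by norm_num
  have hsq : ∑ s : Cube d, (Y s)^2 ≤ 3 * 2^d := by
    have he : ∀ s : Cube d, (Y s)^2 = ((Y s - 1)^2 + 2*(Y s)) - 1 := fun s => by ring
    rw [Finset.sum_congr rfl fun s _ => he s, Finset.sum_sub_distrib, Finset.sum_add_distrib,
      ← Finset.mul_sum, hsum, sum_one_cube]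
    linarith [hvar]
  set T : Finset (Cube d) := univ.filter (fun s => 1/2 < Y s) with hT
  have hTsum : 2^d / 2 ≤ ∑ s ∈ T, Y s := by
    have hsplit := Finset.sum_filter_add_sum_filter_not univ (fun s => 1/2 < Y s) Y
    have hnotbound : ∑ s ∈ univ.filter (fun s => ¬ (1/2 < Y s)), Y s ≤ 2^d * (1/2) := by
      have hcard : ((univ.filter (fun s : Cube d => ¬ (1/2 < Y s))).card : ℝ) ≤ 2^d := by
        have h := Finset.card_le_univ (univ.filter (fun s : Cube d => ¬ (1/2 < Y s)))
        rw [card_cube] at h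
        exact_mod_cast h
      calc ∑ s ∈ univ.filter (fun s => ¬ (1/2 < Y s)), Y s
          ≤ ∑ _s ∈ univ.filter (fun s : Cube d => ¬ (1/2 < Y s)), (1/2:ℝ) := by
            apply Finset.sum_le_sum
            intro s hs
            exact le_of_not_gt (Finset.mem_filter.mp hs).2
      _ = ((univ.filter (fun s : Cube d => ¬ (1/2 < Y s))).card : ℝ) * (1/2) := by
            rw [Finset.sum_const, nsmul_eq_mul]
      _ ≤ 2^d * (1/2) := by linarith [hcard]
    linarith [hsplit, hsum, hnotbound]
  have hsubT : ∑ s ∈ T, (Y s)^2 ≤ 3*2^d :=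
    le_trans (Finset.sum_le_sum_of_subset_of_nonneg (Finset.subset_univ T)
      (fun s _ _ => sq_nonneg _)) hsq
  have hCS : (∑ s ∈ T, Y s)^2 ≤ (3*2^d) * T.card := by
    have h1 := Finset.sum_mul_sq_le_sq_mul_sq T Y (fun _ => 1)
    simp only [mul_one, one_pow] at h1
    rw [Finset.sum_const, nsmul_eq_mul, mul_one] at h1
    calc (∑ s ∈ T, Y s)^2 ≤ (∑ s ∈ T, (Y s)^2) * (T.card : ℝ) := h1
    _ ≤ (3*2^d) * T.card := by
        apply mul_le_mul_of_nonneg_right hsubT (by positivity)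
  have hP : (0:ℝ) < 2^d := by positivity
  have hTcard : 2^d/12 ≤ (T.card:ℝ) := by
    nlinarith [hTsum, hCS, hP]
  have hdisj : Disjoint E T := by
    rw [Finset.disjoint_left]
    intro s hsE hsT
    have h1 := hE s hsE
    have h2 := (Finset.mem_filter.mp hsT).2
    rw [hYX] at h2
    linarith
  have hcards : (E.card:ℝ) + (T.card:ℝ) ≤ 2^d := by
    have h := Finset.card_le_univ (E ∪ T)
    rw [Finset.card_union_of_disjoint hdisj, card_cube] at h
    exact_mod_cast h
  linarith

set_option maxHeartbeats 2000000 in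
lemma tala_bound {d k : ℕ} (c : Fin k → Fin d → ℝ)
    (hortho : ∀ i j, ∑ a, c i a * c j a = if i = j then (1:ℝ) else 0)
    (hk : (16384:ℝ) ≤ (k:ℝ)) (E : Finset (Cube d))
    (hE : ∀ s ∈ E, Sv c s ≤ (k:ℝ)/2) :
    (E.card : ℝ) ≤ 2^(d+1) * exp (-(7/100*(k:ℝ))/16) := by
  classical
  set A : Finset (Cube d) := univ.filter (fun s => Sv c s ≤ (k:ℝ)/2) with hA
  have hEA : E ⊆ A := fun s hs => Finset.mem_filter.mpr ⟨mem_univ s, hE s hs⟩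
  by_cases hAne : A.Nonempty
  case neg =>
    have : E = ∅ := by
      rw [Finset.not_nonempty_iff_eq_empty] at hAne
      exact Finset.subset_empty.mp (hAne ▸ hEA)
    rw [this]
    simp
    positivity
  case pos =>
  have hk0 : (0:ℝ) < k := by linarith
  set sk := Real.sqrt (k:ℝ) with hsk
  have hsksq : sk^2 = k := Real.sq_sqrt hk0.le
  have hsknn : 0 ≤ sk := Real.sqrt_nonneg _
  have hsk128 : 128 ≤ sk := by nlinarith [hsksq, hk, hsknn]
  have hskk : sk ≤ (k:ℝ)/128 := by nlinarith [hsksq, hsk128]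
  set α0 := Real.sqrt ((k:ℝ)/2) with hα0
  set αk := Real.sqrt ((k:ℝ) - 2*sk) with hαk
  have hkk : 0 ≤ (k:ℝ) - 2*sk := by nlinarith
  have hα0sq : α0^2 = (k:ℝ)/2 := Real.sq_sqrt (by positivity)
  have hαksq : αk^2 = (k:ℝ) - 2*sk := Real.sq_sqrt hkk
  have hα0nn : 0 ≤ α0 := Real.sqrt_nonneg _
  have hαknn : 0 ≤ αk := Real.sqrt_nonneg _
  have hαkle : αk ≤ sk := by nlinarith
  have hα0le : α0 ≤ 0.70711 * sk := by nlinarith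
  set u := αk - α0 with hu
  have hu0 : 0 ≤ u := by
    rw [hu]
    have h5 : α0 ≤ αk := by nlinarith
    linarith
  have husq : 7/100 * (k:ℝ) ≤ u^2 := by
    have hprod : αk * α0 ≤ sk * (0.70711 * sk) :=
      mul_le_mul hαkle hα0le hα0nn hsknn
    nlinarith [hprod, hαksq, hα0sq, hsksq, hskk]
  set Big := univ.filter (fun x : Cube d => (k:ℝ) - 2*sk < Sv c x) with hBig
  have hbigc : ((univ.filter (fun x : Cube d => ¬ ((k:ℝ) - 2*sk < Sv c x))).card : ℝ) ≤ 2^d/2 := by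
    have hlow : ∀ x ∈ univ.filter (fun x : Cube d => ¬ ((k:ℝ) - 2*sk < Sv c x)),
        4*(k:ℝ) ≤ (Sv c x - (k:ℝ))^2 := by
      intro x hx
      have h1 : Sv c x ≤ (k:ℝ) - 2*sk := le_of_not_gt (Finset.mem_filter.mp hx).2
      nlinarith [hsksq, hsknn]
    have hsum1 := Finset.sum_le_sum hlow
    rw [Finset.sum_const, nsmul_eq_mul] at hsum1
    have hsum2 : ∑ x ∈ univ.filter (fun x : Cube d => ¬ ((k:ℝ) - 2*sk < Sv c x)),
        (Sv c x - (k:ℝ))^2 ≤ 2^d * (2*(k:ℝ)) :=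
      le_trans (Finset.sum_le_sum_of_subset_of_nonneg (Finset.subset_univ _)
        fun x _ _ => sq_nonneg _) (sum_Sv_var c hortho)
    nlinarith [hsum1, hsum2, hk0]
  have hbigcard : 2^d/2 ≤ (Big.card:ℝ) := by
    have h := Finset.card_filter_add_card_filter_not
      (s := (univ : Finset (Cube d))) (p := fun x : Cube d => (k:ℝ) - 2*sk < Sv c x)
    rw [Finset.card_univ, card_cube] at h
    have hcast : (Big.card:ℝ)
        + ((univ.filter (fun x : Cube d => ¬ ((k:ℝ) - 2*sk < Sv c x))).card : ℝ) = 2^d := by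
      exact_mod_cast h
    linarith [hbigc]
  have hpt : ∀ x ∈ Big, exp (u^2/16) ≤ exp (dst A x / 4) := by
    intro x hx
    have h1 : (k:ℝ) - 2*sk < Sv c x := (Finset.mem_filter.mp hx).2
    have h2 : αk ≤ Real.sqrt (Sv c x) := by
      rw [hαk]; exact Real.sqrt_le_sqrt h1.le
    have h3 : Real.sqrt (Sv c x) ≤ α0 + 2 * Real.sqrt (dst A x) := by
      apply conv_bound c hortho A hAne α0 hα0nn _ x
      intro y hy
      have hy2 : Sv c y ≤ (k:ℝ)/2 := (Finset.mem_filter.mp hy).2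
      rw [hα0]
      exact Real.sqrt_le_sqrt hy2
    have h4 : u ≤ 2 * Real.sqrt (dst A x) := by rw [hu]; linarith
    have h5 : u^2 ≤ 4 * dst A x := by
      have h6 := Real.sq_sqrt (dst_nonneg A x)
      nlinarith [Real.sqrt_nonneg (dst A x), h4, hu0]
    apply Real.exp_le_exp.mpr
    calc u^2/16 ≤ (4 * dst A x)/16 := div_le_div_of_nonneg_right h5 (by norm_num)
    _ = dst A x / 4 := by ring
  have hsum3 : (Big.card:ℝ) * exp (u^2/16) ≤ (4:ℝ)^d / A.card := by
    calc (Big.card:ℝ) * exp (u^2/16) ≤ ∑ x ∈ Big, exp (dst A x/4) := by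
          have h := Finset.card_nsmul_le_sum Big (fun x => exp (dst A x/4)) (exp (u^2/16)) hpt
          rwa [nsmul_eq_mul] at h
    _ ≤ ∑ x : Cube d, exp (dst A x/4) :=
          Finset.sum_le_sum_of_subset_of_nonneg (Finset.subset_univ _)
            (fun x _ _ => (exp_pos _).le)
    _ ≤ (4:ℝ)^d / A.card := talagrand d A hAne
  have hApos : (0:ℝ) < A.card := by exact_mod_cast hAne.card_pos
  have hexpu : (0:ℝ) < exp (u^2/16) := exp_pos _
  have h6 : ((Big.card:ℝ) * exp (u^2/16)) * (A.card:ℝ) ≤ (4:ℝ)^d := by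
    rw [← le_div_iff₀ hApos]
    exact hsum3
  have h7 : (2^d/2 * exp (u^2/16)) * (A.card:ℝ) ≤ (4:ℝ)^d := by
    refine le_trans ?_ h6
    apply mul_le_mul_of_nonneg_right _ hApos.le
    exact mul_le_mul_of_nonneg_right hbigcard hexpu.le
  have h8 : (A.card:ℝ) ≤ 2^(d+1) * exp (-(u^2)/16) := by
    have h4d : (4:ℝ)^d = 2^d * 2^d := by
      rw [← mul_pow]; norm_num
    rw [show -(u^2)/16 = -(u^2/16) by ring, Real.exp_neg]
    rw [show (2:ℝ)^(d+1) * (exp (u^2/16))⁻¹ = (2^d * 2^d) / (2^d/2 * exp (u^2/16)) by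
      rw [eq_div_iff (by positivity)]
      field_simp [Real.exp_ne_zero]
      ring]
    rw [le_div_iff₀ (by positivity)]
    nlinarith [h7, h4d]
  have h9 : exp (-(u^2)/16) ≤ exp (-(7/100*(k:ℝ))/16) := by
    apply Real.exp_le_exp.mpr
    linarith [husq]
  calc (E.card:ℝ) ≤ (A.card:ℝ) := by exact_mod_cast Finset.card_le_card hEA
  _ ≤ 2^(d+1)*exp (-(u^2)/16) := h8
  _ ≤ 2^(d+1)*exp (-(7/100*(k:ℝ))/16) := by
      apply mul_le_mul_of_nonneg_left h9 (by positivity)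

lemma log_two_le : Real.log 2 ≤ 0.7 := by
  rw [Real.log_le_iff_le_exp (by norm_num)]
  have h7 : exp ((0.7:ℝ))^(10:ℕ) = exp 7 := by
    rw [← Real.exp_nat_mul]; norm_num
  have hge : (2:ℝ)^(10:ℕ) ≤ exp ((0.7:ℝ))^(10:ℕ) := by
    rw [h7]
    have h1 : exp (7:ℝ) = exp 1 ^ (7:ℕ) := by
      rw [← Real.exp_nat_mul]; norm_num
    rw [h1]
    calc (2:ℝ)^(10:ℕ) = 1024 := by norm_num
    _ ≤ (2.7182818283:ℝ)^(7:ℕ) := by norm_num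
    _ ≤ exp 1 ^ (7:ℕ) := by
        apply pow_le_pow_left₀ (by norm_num)
        exact (Real.exp_one_gt_d9).le
  exact (pow_le_pow_iff_left₀ (by norm_num) (exp_pos _).le (by norm_num)).mp hge

lemma exp_112_le : exp ((1:ℝ)/12) ≤ 12/11 := by
  have h12 : exp ((1:ℝ)/12)^(12:ℕ) = exp 1 := by
    rw [← Real.exp_nat_mul]; norm_num
  have hge : exp ((1:ℝ)/12)^(12:ℕ) ≤ ((12:ℝ)/11)^(12:ℕ) := by
    rw [h12]
    calc exp 1 ≤ 2.7182818286 := (Real.exp_one_lt_d9).le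
    _ ≤ ((12:ℝ)/11)^(12:ℕ) := by norm_num
  exact (pow_le_pow_iff_left₀ (exp_pos _).le (by norm_num) (by norm_num)).mp hge

lemma small_k_numeric {k : ℕ} (hk2 : (k:ℝ) ≤ 16383) :
    (11/12:ℝ) ≤ (2:ℝ)^(-(1/200000*(k:ℝ)):ℝ) := by
  rw [Real.rpow_def_of_pos (by norm_num : (0:ℝ) < 2)]
  rw [show Real.log 2 * (-(1/200000*(k:ℝ))) = -(Real.log 2 * (1/200000*(k:ℝ))) by ring,
    Real.exp_neg]
  have hker : (0:ℝ) ≤ (k:ℝ) := Nat.cast_nonneg k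
  have h1 : Real.log 2 * (1/200000*(k:ℝ)) ≤ 1/12 := by
    have h4 : Real.log 2 * (k:ℝ) ≤ 0.7 * (k:ℝ) :=
      mul_le_mul_of_nonneg_right log_two_le hker
    nlinarith [h4, hk2]
  have h2 : exp (Real.log 2 * (1/200000*(k:ℝ))) ≤ 12/11 :=
    le_trans (Real.exp_le_exp.mpr h1) exp_112_le
  have h3 : (0:ℝ) < exp (Real.log 2 * (1/200000*(k:ℝ))) := exp_pos _
  calc (11/12:ℝ) = ((12:ℝ)/11)⁻¹ := by norm_num
  _ ≤ (exp (Real.log 2 * (1/200000*(k:ℝ))))⁻¹ := inv_anti₀ h3 h2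

lemma large_k_numeric {k : ℕ} (hk : (16384:ℝ) ≤ (k:ℝ)) :
    2*exp (-(7/100*(k:ℝ))/16) ≤ (2:ℝ)^(-(1/200000*(k:ℝ)):ℝ) := by
  rw [Real.rpow_def_of_pos (by norm_num : (0:ℝ) < 2)]
  have h4 : Real.log 2 * (k:ℝ) ≤ 0.7 * (k:ℝ) :=
    mul_le_mul_of_nonneg_right log_two_le (by linarith)
  have hBA : (1:ℝ) ≤ Real.log 2 * (-(1/200000*(k:ℝ))) - (-(7/100*(k:ℝ))/16) := by
    nlinarith [h4, hk]
  have h3 : (2:ℝ) ≤ exp (Real.log 2 * (-(1/200000*(k:ℝ))) - (-(7/100*(k:ℝ))/16)) := by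
    calc (2:ℝ) ≤ 2.7182818283 := by norm_num
    _ ≤ exp 1 := Real.exp_one_gt_d9.le
    _ ≤ exp (Real.log 2 * (-(1/200000*(k:ℝ))) - (-(7/100*(k:ℝ))/16)) := Real.exp_le_exp.mpr hBA
  calc 2*exp (-(7/100*(k:ℝ))/16)
      ≤ exp (Real.log 2 * (-(1/200000*(k:ℝ))) - (-(7/100*(k:ℝ))/16)) * exp (-(7/100*(k:ℝ))/16) :=
        mul_le_mul_of_nonneg_right h3 (exp_pos _).le
  _ = exp (Real.log 2 * (-(1/200000*(k:ℝ)))) := by rw [← Real.exp_add]; ring_nf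

end
end HW

open InnerProductSpace

set_option maxHeartbeats 1000000 in
/-- The hypercube is a memory-sensitive base: for `h` uniform on `{±1}^d` and `Z` with
`k` orthonormal columns, `ℙ(‖Zᵀh‖_∞ ≤ t) ≤ 2^{-ck}` for all `t ∈ (0, 1/√2]`, where
`c > 0` is an absolute constant.  Probability is expressed by counting sign patterns. -/
theorem stmt_4 :
    ∃ c : ℝ, 0 < c ∧
      ∀ (d k : ℕ) (z : Fin k → EuclideanSpace ℝ (Fin d)), Orthonormal ℝ z →
        ∀ t : ℝ, 0 < t → t ≤ 1 / Real.sqrt 2 →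
          ((Finset.univ.filter fun s : Fin d → Bool =>
              ∀ i : Fin k,
                |(⟪z i, (WithLp.toLp 2 (fun j => if s j then (1 : ℝ) else -1) : EuclideanSpace ℝ (Fin d))⟫_ℝ)| ≤ t
            ).card : ℝ) / 2 ^ d ≤ 2 ^ (-(c * k)) := by
  classical
  refine ⟨1/200000, by norm_num, ?_⟩
  intro d k z hz t ht ht2
  set c : Fin k → Fin d → ℝ := fun i a => z i a with hc
  have hortho : ∀ i j, ∑ a, c i a * c j a = if i = j then (1:ℝ) else 0 := by
    intro i j
    have h := (orthonormal_iff_ite.mp hz) i j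
    rw [PiLp.inner_apply] at h
    simp only [hc]
    simpa [RCLike.inner_apply, mul_comm] using h
  set E := (Finset.univ.filter fun s : Fin d → Bool =>
      ∀ i : Fin k,
        |(⟪z i, (WithLp.toLp 2 (fun j => if s j then (1:ℝ) else -1) : EuclideanSpace ℝ (Fin d))⟫_ℝ)| ≤ t) with hE
  have hinner : ∀ (i : Fin k) (s : Fin d → Bool),
      (⟪z i, (WithLp.toLp 2 (fun j => if s j then (1:ℝ) else -1) : EuclideanSpace ℝ (Fin d))⟫_ℝ)
        = HW.Xv c i s := by
    intro i s
    rw [PiLp.inner_apply]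
    have hterm : ∀ a : Fin d,
        (inner ℝ (z i a) ((WithLp.toLp 2 (fun j => if s j then (1:ℝ) else -1) : EuclideanSpace ℝ (Fin d)) a) : ℝ)
          = c i a * HW.eps s a := by
      intro a
      simp [RCLike.inner_apply, hc, HW.eps]
    rw [Finset.sum_congr rfl fun a _ => hterm a]
    rfl
  have hpow : (0:ℝ) < 2^d := by positivity
  have hEcard : (E.card : ℝ) ≤ 2^d := by
    have h := Finset.card_le_univ E
    have h2 : Fintype.card (Fin d → Bool) = 2^d := HW.card_cube d
    rw [h2] at h
    exact_mod_cast h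
  rcases Nat.eq_zero_or_pos k with hk0 | hkpos
  · subst hk0
    rw [show (-(1/200000 * ((0:ℕ):ℝ))) = (0:ℝ) by norm_num, Real.rpow_zero]
    rw [div_le_one hpow]
    exact hEcard
  · have habs : ∀ s ∈ E, ∀ i : Fin k, (HW.Xv c i s)^2 ≤ t^2 := by
      intro s hs i
      have h1 := (Finset.mem_filter.mp hs).2 i
      rw [hinner i s] at h1
      calc (HW.Xv c i s)^2 = |HW.Xv c i s|^2 := (sq_abs _).symm
      _ ≤ t^2 := pow_le_pow_left₀ (abs_nonneg _) h1 2
    have ht12 : t^2 ≤ 1/2 := by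
      have h2 : t^2 ≤ (1/Real.sqrt 2)^2 := pow_le_pow_left₀ ht.le ht2 2
      rw [div_pow, one_pow, Real.sq_sqrt (by norm_num : (0:ℝ) ≤ 2)] at h2
      linarith
    have hhalf : ∀ s ∈ E, ∀ i : Fin k, (HW.Xv c i s)^2 ≤ 1/2 :=
      fun s hs i => le_trans (habs s hs i) ht12
    by_cases hksz : (k:ℝ) ≤ 16383
    · have h1 := HW.pz_bound c hortho hkpos E (fun s hs => hhalf s hs ⟨0, hkpos⟩)
      calc (E.card:ℝ)/2^d ≤ (11/12*2^d)/2^d := div_le_div_of_nonneg_right h1 hpow.le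
      _ = 11/12 := by rw [mul_div_assoc, div_self hpow.ne', mul_one]
      _ ≤ _ := HW.small_k_numeric hksz
    · push_neg at hksz
      have hk16 : (16384:ℝ) ≤ (k:ℝ) := by
        have hn : (16383:ℕ) < k := by exact_mod_cast hksz
        have hn2 : (16384:ℕ) ≤ k := hn
        exact_mod_cast hn2
      have hSk : ∀ s ∈ E, HW.Sv c s ≤ (k:ℝ)/2 := by
        intro s hs
        unfold HW.Sv
        calc ∑ i, (HW.Xv c i s)^2
            ≤ ∑ _i : Fin k, (1/2:ℝ) := Finset.sum_le_sum (fun i _ => hhalf s hs i)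
        _ = k * (1/2) := by
            rw [Finset.sum_const, nsmul_eq_mul, Finset.card_univ, Fintype.card_fin]
        _ = k/2 := by ring
      have h1 := HW.tala_bound c hortho hk16 E hSk
      calc (E.card:ℝ)/2^d
          ≤ (2^(d+1) * Real.exp (-(7/100*(k:ℝ))/16))/2^d := div_le_div_of_nonneg_right h1 hpow.le
      _ = 2 * Real.exp (-(7/100*(k:ℝ))/16) := by
          rw [pow_succ]
          field_simp
      _ ≤ _ := HW.large_k_numeric hk16
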